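/- If two or more of the quantities among d_1,…,d_n, c are negative, then the matrix D + c·1 1^T is not positive definite (the equilibrium is unstable). -/

import Mathlib

open Matrix

lemma quadform_aux (n : ℕ) (d : Fin n → ℝ) (c : ℝ) (x : Fin n → ℝ) :
    x ⬝ᵥ ((Matrix.diagonal d + Matrix.of fun _ _ : Fin n => c) *ᵥ x)
      = (∑ i, d i * x i ^ 2) + c * (∑ i, x i) ^ 2 := by
  simp only [Matrix.add_mulVec, dotProduct_add]
  congr 1
  · simp only [dotProduct, Matrix.mulVec_diagonal]
    exact Finset.sum_congr rfl fun i _ => by ring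
  · simp only [dotProduct, Matrix.mulVec, Matrix.of_apply]
    rw [sq, Finset.sum_mul_sum, Finset.mul_sum]
    refine Finset.sum_congr rfl fun i _ => ?_
    rw [Finset.mul_sum, Finset.mul_sum]
    exact Finset.sum_congr rfl fun j _ => by ring

theorem diagonal_plus_rank_one_not_posdef_of_two_negatives (n : ℕ)
    (d : Fin n → ℝ) (c : ℝ)
    (h : (∃ i j : Fin n, i ≠ j ∧ d i < 0 ∧ d j < 0) ∨ (c < 0 ∧ ∃ i, d i < 0)) :
    ¬ (Matrix.diagonal d + Matrix.of fun _ _ : Fin n => c).PosDef := by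
  intro hpd
  rcases h with ⟨i, j, hij, hi, hj⟩ | ⟨hc, i, hi⟩
  · set x : Fin n → ℝ := Pi.single i 1 - Pi.single j 1 with hx
    have hx0 : x ≠ 0 := by
      intro h0
      have := congrFun h0 i
      simp [hx, Pi.single_apply, hij, Ne.symm hij] at this
    have hpos := hpd.dotProduct_mulVec_pos hx0
    rw [show star x = x by simp, quadform_aux] at hpos
    have hs : (∑ k, x k) = 0 := by
      simp [hx, Finset.sum_sub_distrib]
    have h1 : (∑ k, d k * x k ^ 2) = d i + d j := by
      rw [show (fun k => d k * x k ^ 2) = fun k =>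
        (Pi.single i (d i) : Fin n → ℝ) k + (Pi.single j (d j) : Fin n → ℝ) k from ?_]
      · simp [Finset.sum_add_distrib]
      · funext k
        by_cases hki : k = i
        · subst hki
          simp [hx, Pi.single_apply, hij, Ne.symm hij]
        · by_cases hkj : k = j
          · subst hkj
            simp [hx, Pi.single_apply, hki, Ne.symm hij]
          · simp [hx, Pi.single_apply, hki, hkj]
    rw [hs, h1] at hpos
    norm_num at hpos
    linarith
  · set x : Fin n → ℝ := Pi.single i 1 with hx
    have hx0 : x ≠ 0 := by
      intro h0
      have := congrFun h0 i
      simp [hx] at this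
    have hpos := hpd.dotProduct_mulVec_pos hx0
    rw [show star x = x by simp, quadform_aux] at hpos
    have hs : (∑ k, x k) = 1 := by simp [hx]
    have h1 : (∑ k, d k * x k ^ 2) = d i := by
      rw [show (fun k => d k * x k ^ 2) = fun k => (Pi.single i (d i) : Fin n → ℝ) k from ?_]
      · simp
      · funext k
        by_cases hki : k = i
        · subst hki; simp [hx]
        · simp [hx, Pi.single_apply, hki]
    rw [hs, h1] at hpos
    norm_num at hpos
    linarith
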